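/- Let P ∈ L²[0,1] satisfy P = Σ_{k=1}^N (d_k G_k P + β_k χ_{(α_k,α_{k+1})}) with Σ a_k d_k ≠ 1 and Σ a_k² d_k ≠ 1, and let P₀ = ∫₀¹ P dμ. Then the first moment P₁ = ∫₀¹ P(x)·x dμ satisfies P₁ = [Σ_{k=1}^N a_k (a_k β_k / 2 + α_k d_k P₀ + α_k β_k)] / (1 − Σ_{k=1}^N a_k² d_k). -/

import Mathlib

open MeasureTheory

/-- The similarity operator `G_S` associated with the data `S = (N, a, d, β)`. -/
noncomputable def simOp (N : ℕ) (a d β : ℕ → ℝ) (f : ℝ → ℝ) : ℝ → ℝ :=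
  fun x => ∑ k ∈ Finset.range N,
    Set.indicator (Set.Ioo (∑ j ∈ Finset.range k, a j) (∑ j ∈ Finset.range (k + 1), a j))
      (fun t => d k * f ((t - ∑ j ∈ Finset.range k, a j) / a k) + β k) x

/-- The first moment of a self-similar `P`:
`P₁ = [Σ a_k (a_k β_k/2 + α_k d_k P₀ + α_k β_k)] / (1 − Σ a_k² d_k)`,
where `α_k = a_0 + ⋯ + a_{k-1}` and `P₀ = ∫ P`. -/
theorem stmt16 (N : ℕ) (hN : 1 < N) (a d β : ℕ → ℝ)
    (ha : ∀ k < N, 0 < a k) (hsum : ∑ k ∈ Finset.range N, a k = 1)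
    (P : ℝ → ℝ) (hP : Measurable P)
    (hPint : IntegrableOn P (Set.Ioo 0 1))
    (hPxint : IntegrableOn (fun x => P x * x) (Set.Ioo 0 1))
    (hPsq : IntegrableOn (fun x => P x ^ 2) (Set.Ioo 0 1))
    (hfix : P =ᵐ[volume.restrict (Set.Ioo (0:ℝ) 1)] simOp N a d β P)
    (hd1 : ∑ k ∈ Finset.range N, a k * d k ≠ 1)
    (hd2 : ∑ k ∈ Finset.range N, a k ^ 2 * d k ≠ 1) :
    ∫ x in Set.Ioo (0:ℝ) 1, P x * x
      = (∑ k ∈ Finset.range N, a k *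
          (a k * β k / 2
            + (∑ j ∈ Finset.range k, a j) * d k * (∫ x in Set.Ioo (0:ℝ) 1, P x)
            + (∑ j ∈ Finset.range k, a j) * β k))
        / (1 - ∑ k ∈ Finset.range N, a k ^ 2 * d k) := by
  set α : ℕ → ℝ := fun k => ∑ j ∈ Finset.range k, a j with hα
  set P₀ : ℝ := ∫ x in Set.Ioo (0:ℝ) 1, P x with hP₀
  set P₁ : ℝ := ∫ x in Set.Ioo (0:ℝ) 1, P x * x with hP₁
  have hα0 : α 0 = 0 := by simp [hα]
  have hαs : ∀ k, α (k + 1) = α k + a k := by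
    intro k; simp [hα, Finset.sum_range_succ]
  have hαN : α N = 1 := hsum
  have hmono : ∀ j k, j ≤ k → k ≤ N → α j ≤ α k := by
    intro j k hjk hkN
    exact Finset.sum_le_sum_of_subset_of_nonneg (Finset.range_subset_range.mpr hjk)
      (fun i hi _ => (ha i (lt_of_lt_of_le (Finset.mem_range.mp hi) hkN)).le)
  -- interval integrability of P and P·x on [0,1]
  have hP01 : IntervalIntegrable P volume 0 1 := by
    rw [intervalIntegrable_iff_integrableOn_Ioc_of_le zero_le_one]
    exact (integrableOn_Ioc_iff_integrableOn_Ioo).mpr hPint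
  have hPx01 : IntervalIntegrable (fun x => P x * x) volume 0 1 := by
    rw [intervalIntegrable_iff_integrableOn_Ioc_of_le zero_le_one]
    exact (integrableOn_Ioc_iff_integrableOn_Ioo).mpr hPxint
  have hP0eq : ∫ t in (0:ℝ)..1, P t = P₀ := by
    rw [intervalIntegral.integral_of_le zero_le_one, integral_Ioc_eq_integral_Ioo]
  have hP1eq : ∫ t in (0:ℝ)..1, P t * t = P₁ := by
    rw [intervalIntegral.integral_of_le zero_le_one, integral_Ioc_eq_integral_Ioo]
  -- per-k facts
  have key : ∀ k, k < N →
      (IntervalIntegrable (fun x => (d k * P ((x - α k) / a k) + β k) * x)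
        volume (α k) (α (k + 1))) ∧
      (∫ x in (α k)..(α (k+1)), (d k * P ((x - α k) / a k) + β k) * x
        = a k * (a k * β k / 2 + α k * d k * P₀ + α k * β k) + a k ^ 2 * d k * P₁) := by
    intro k hk
    have hak : 0 < a k := ha k hk
    have hakne : a k ≠ 0 := hak.ne'
    have hcomp : IntervalIntegrable (fun x => P ((x - α k) / a k)) volume (α k) (α (k+1)) := by
      have h1 := (hP01.comp_mul_right (c := (a k)⁻¹))
      have h2 := h1.comp_sub_right (α k)
      have e0 : (0:ℝ) / (a k)⁻¹ + α k = α k := by simp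
      have e1 : (1:ℝ) / (a k)⁻¹ + α k = α (k+1) := by rw [hαs]; field_simp; ring
      rw [e0, e1] at h2
      simpa [div_eq_mul_inv] using h2
    have hFk : IntervalIntegrable (fun x => d k * P ((x - α k) / a k) + β k)
        volume (α k) (α (k+1)) :=
      (hcomp.const_mul (d k)).add intervalIntegrable_const
    have hII : IntervalIntegrable (fun x => (d k * P ((x - α k) / a k) + β k) * x)
        volume (α k) (α (k+1)) :=
      hFk.mul_continuousOn continuous_id.continuousOn
    refine ⟨hII, ?_⟩
    have hsub : ∫ x in (α k)..(α (k+1)), (d k * P ((x - α k) / a k) + β k) * x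
        = a k * ∫ t in (0:ℝ)..1, (d k * P t + β k) * (α k + a k * t) := by
      have := intervalIntegral.integral_comp_mul_add
        (a := (0:ℝ)) (b := 1) (f := fun x => (d k * P ((x - α k) / a k) + β k) * x)
        hakne (α k)
      rw [mul_zero, mul_one, zero_add, show a k + α k = α (k+1) by rw [hαs]; ring] at this
      have hcg : ∀ t : ℝ, (d k * P ((a k * t + α k - α k) / a k) + β k) * (a k * t + α k)
          = (d k * P t + β k) * (α k + a k * t) := by
        intro t
        rw [add_sub_cancel_right, mul_div_cancel_left₀ _ hakne]
        ring
      rw [intervalIntegral.integral_congr (fun t _ => hcg t)] at this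
      rw [this, smul_eq_mul, ← mul_assoc, mul_inv_cancel₀ hakne, one_mul]
    rw [hsub]
    have hexp : ∀ t : ℝ, (d k * P t + β k) * (α k + a k * t)
        = (d k * α k) * P t + (d k * a k) * (P t * t) + (β k * α k + (β k * a k) * t) := by
      intro t; ring
    rw [intervalIntegral.integral_congr (fun t _ => hexp t)]
    rw [intervalIntegral.integral_add
          ((hP01.const_mul _).add (hPx01.const_mul _))
          ((intervalIntegrable_const).add ((intervalIntegral.intervalIntegrable_id).const_mul _)),
        intervalIntegral.integral_add (hP01.const_mul _) (hPx01.const_mul _),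
        intervalIntegral.integral_add (intervalIntegrable_const)
          ((intervalIntegral.intervalIntegrable_id).const_mul _),
        intervalIntegral.integral_const]
    simp only [intervalIntegral.integral_const_mul, intervalIntegral.integral_const,
      integral_id, hP0eq, hP1eq, smul_eq_mul]
    rw [intervalIntegral.integral_const_mul, integral_id]
    ring
  -- subsets
  have hsubset : ∀ k, k < N → Set.Ioo (α k) (α (k+1)) ⊆ Set.Ioo (0:ℝ) 1 := by
    intro k hk
    apply Set.Ioo_subset_Ioo
    · rw [← hα0]; exact hmono 0 k (Nat.zero_le _) hk.le
    · rw [← hαN]; exact hmono (k+1) N hk (le_refl N)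
  have hle : ∀ k, k < N → α k ≤ α (k+1) := by
    intro k hk; rw [hαs]; linarith [ha k hk]
  -- integrability of indicator terms
  have hIndInt : ∀ k, k < N →
      Integrable (fun x => (Set.Ioo (α k) (α (k+1))).indicator
        (fun t => (d k * P ((t - α k) / a k) + β k) * t) x)
        (volume.restrict (Set.Ioo (0:ℝ) 1)) := by
    intro k hk
    have h1 : IntegrableOn (fun t => (d k * P ((t - α k) / a k) + β k) * t)
        (Set.Ioo (α k) (α (k+1))) := by
      have := ((key k hk).1)
      rw [intervalIntegrable_iff_integrableOn_Ioc_of_le (hle k hk)] at this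
      exact this.mono_set Set.Ioo_subset_Ioc_self
    exact (h1.integrable_indicator measurableSet_Ioo).restrict
  -- main computation
  have hmain : P₁ = ∫ x in Set.Ioo (0:ℝ) 1, simOp N a d β P x * x := by
    exact integral_congr_ae (hfix.mul (Filter.EventuallyEq.refl _ id))
  have hsplit : P₁ = ∑ k ∈ Finset.range N,
      (a k * (a k * β k / 2 + α k * d k * P₀ + α k * β k) + a k ^ 2 * d k * P₁) := by
    conv_lhs => rw [hmain]
    simp only [simOp, Finset.sum_mul]
    have hrw : ∀ x : ℝ, (∑ k ∈ Finset.range N,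
        (Set.Ioo (α k) (α (k+1))).indicator
          (fun t => d k * P ((t - α k) / a k) + β k) x * x)
        = ∑ k ∈ Finset.range N, (Set.Ioo (α k) (α (k+1))).indicator
          (fun t => (d k * P ((t - α k) / a k) + β k) * t) x := by
      intro x
      refine Finset.sum_congr rfl fun k _ => ?_
      rw [Set.indicator_mul_left]
    rw [integral_congr_ae (Filter.EventuallyEq.refl _ _)]
    calc ∫ x in Set.Ioo (0:ℝ) 1, ∑ k ∈ Finset.range N,
          (Set.Ioo (α k) (α (k+1))).indicator
            (fun t => d k * P ((t - α k) / a k) + β k) x * x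
        = ∫ x in Set.Ioo (0:ℝ) 1, ∑ k ∈ Finset.range N,
            (Set.Ioo (α k) (α (k+1))).indicator
              (fun t => (d k * P ((t - α k) / a k) + β k) * t) x := by
          exact integral_congr_ae (Filter.Eventually.of_forall (fun x => hrw x))
      _ = ∑ k ∈ Finset.range N, ∫ x in Set.Ioo (0:ℝ) 1,
            (Set.Ioo (α k) (α (k+1))).indicator
              (fun t => (d k * P ((t - α k) / a k) + β k) * t) x := by
          exact integral_finset_sum _ (fun k hk => hIndInt k (Finset.mem_range.mp hk))
      _ = ∑ k ∈ Finset.range N,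
            (a k * (a k * β k / 2 + α k * d k * P₀ + α k * β k) + a k ^ 2 * d k * P₁) := by
          refine Finset.sum_congr rfl fun k hk => ?_
          have hk' := Finset.mem_range.mp hk
          rw [setIntegral_indicator measurableSet_Ioo,
            Set.inter_eq_self_of_subset_right (hsubset k hk'),
            ← integral_Ioc_eq_integral_Ioo,
            ← intervalIntegral.integral_of_le (hle k hk')]
          exact (key k hk').2
  have hsum' : P₁ = (∑ k ∈ Finset.range N,
      a k * (a k * β k / 2 + α k * d k * P₀ + α k * β k))
      + (∑ k ∈ Finset.range N, a k ^ 2 * d k) * P₁ := by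
    conv_lhs => rw [hsplit]
    rw [Finset.sum_add_distrib, ← Finset.sum_mul]
  have hC : (1 : ℝ) - ∑ k ∈ Finset.range N, a k ^ 2 * d k ≠ 0 := by
    intro h
    apply hd2
    linarith
  simp only [hα] at hsum'
  rw [eq_div_iff hC]
  linear_combination hsum'
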